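/- For every fixed g_u > 0, lim_{γ̄ → ∞} (∫₀^{g_u} log₂(1 + γ̄ g) e^{−g} dg) / log₂(γ̄) = 1 − e^{−g_u}. -/

import Mathlib

open MeasureTheory Real Filter intervalIntegral

-- log is interval integrable on [0, b] despite the singularity at 0
lemma intInt_log (b : ℝ) (hb : 0 < b) :
    IntervalIntegrable Real.log MeasureTheory.volume 0 b := by
  have hdom : IntervalIntegrable (fun x : ℝ => (2 + 2 * b) * x ^ (-(1/2) : ℝ))
      MeasureTheory.volume 0 b :=
    (intervalIntegrable_rpow' (by norm_num)).const_mul _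
  refine hdom.mono_fun' (Real.measurable_log.aestronglyMeasurable) ?_
  rw [Filter.EventuallyLE, ae_restrict_iff' measurableSet_uIoc]
  refine Filter.Eventually.of_forall fun x hx => ?_
  rw [Set.uIoc_of_le hb.le] at hx
  obtain ⟨hx0, hxb⟩ := hx
  have hs : 0 < Real.sqrt x := Real.sqrt_pos.mpr hx0
  have h1 : Real.log x = 2 * Real.log (Real.sqrt x) := by
    rw [Real.log_sqrt hx0.le]; ring
  have h2 : |Real.log (Real.sqrt x)| ≤ Real.sqrt x + (Real.sqrt x)⁻¹ := by
    rcases abs_cases (Real.log (Real.sqrt x)) with ⟨he, _⟩ | ⟨he, _⟩ <;> rw [he]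
    · have := Real.log_le_sub_one_of_pos hs
      have : Real.log (Real.sqrt x) ≤ Real.sqrt x := by linarith
      nlinarith [inv_pos.mpr hs]
    · have : Real.log (Real.sqrt x)⁻¹ ≤ (Real.sqrt x)⁻¹ - 1 :=
        Real.log_le_sub_one_of_pos (inv_pos.mpr hs)
      rw [Real.log_inv] at this
      nlinarith [hs]
  have hrpow : x ^ (-(1/2) : ℝ) = (Real.sqrt x)⁻¹ := by
    rw [Real.rpow_neg hx0.le, Real.sqrt_eq_rpow]
  have hsle : Real.sqrt x ≤ b * (Real.sqrt x)⁻¹ := by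
    rw [← div_eq_mul_inv, le_div_iff₀ hs]
    nlinarith [Real.sq_sqrt hx0.le]
  simp only [Real.norm_eq_abs]
  calc |Real.log x| = 2 * |Real.log (Real.sqrt x)| := by rw [h1, abs_mul]; simp
    _ ≤ 2 * (Real.sqrt x + (Real.sqrt x)⁻¹) := by linarith
    _ ≤ (2 + 2 * b) * x ^ (-(1/2) : ℝ) := by
        rw [hrpow]; nlinarith [inv_pos.mpr hs]

/-- High-SNR asymptotics of the PHAT-IP ergodic throughput:
`∫₀^{g_u} log₂(1 + γ̄ g) e^{−g} dg ≈ log₂(γ̄) (1 − e^{−g_u})` as `γ̄ → ∞`. -/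
theorem phat_ip_high_snr_limit (gu : ℝ) (hgu : 0 < gu) :
    Tendsto
      (fun γ : ℝ => (∫ g in (0:ℝ)..gu, Real.logb 2 (1 + γ * g) * Real.exp (-g))
        / Real.logb 2 γ)
      atTop (nhds (1 - Real.exp (-gu))) := by
  have hlog2 : Real.log 2 ≠ 0 := ne_of_gt (Real.log_pos one_lt_two)
  -- value of the basic integral
  have hA : (∫ g in (0:ℝ)..gu, Real.exp (-g)) = 1 - Real.exp (-gu) := by
    have := integral_comp_neg (a := (0:ℝ)) (b := gu) (fun x => Real.exp x)
    rw [this, integral_exp]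
    simp
  set A : ℝ := 1 - Real.exp (-gu) with hAdef
  -- integrability facts
  have I_exp : IntervalIntegrable (fun g : ℝ => Real.exp (-g)) volume 0 gu :=
    (Real.continuous_exp.comp continuous_neg).intervalIntegrable 0 gu
  have I_loge : IntervalIntegrable (fun g : ℝ => Real.log g * Real.exp (-g)) volume 0 gu :=
    (intInt_log gu hgu).mul_continuousOn
      ((Real.continuous_exp.comp continuous_neg).continuousOn)
  have I_upe : IntervalIntegrable
      (fun g : ℝ => (Real.log 2 + Real.log (1 + g)) * Real.exp (-g)) volume 0 gu := by
    apply ContinuousOn.intervalIntegrable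
    apply ContinuousOn.mul _ ((Real.continuous_exp.comp continuous_neg).continuousOn)
    apply ContinuousOn.add continuousOn_const
    apply ContinuousOn.log (by fun_prop)
    intro x hx
    rw [Set.uIcc_of_le hgu.le] at hx
    nlinarith [hx.1]
  set C₁ : ℝ := ∫ g in (0:ℝ)..gu, Real.log g * Real.exp (-g) with hC₁
  set C₂ : ℝ := ∫ g in (0:ℝ)..gu, (Real.log 2 + Real.log (1 + g)) * Real.exp (-g) with hC₂
  set X : ℝ → ℝ := fun γ => ∫ g in (0:ℝ)..gu, Real.log (1 + γ * g) * Real.exp (-g) with hX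
  have I_X : ∀ γ : ℝ, 0 < γ → IntervalIntegrable
      (fun g : ℝ => Real.log (1 + γ * g) * Real.exp (-g)) volume 0 gu := by
    intro γ hγ
    apply ContinuousOn.intervalIntegrable
    apply ContinuousOn.mul _ ((Real.continuous_exp.comp continuous_neg).continuousOn)
    apply ContinuousOn.log (by fun_prop)
    intro x hx
    rw [Set.uIcc_of_le hgu.le] at hx
    nlinarith [hx.1]
  -- lower bound
  have hlow : ∀ γ : ℝ, 1 ≤ γ → Real.log γ * A + C₁ ≤ X γ := by
    intro γ hγ
    have hγ0 : (0:ℝ) < γ := lt_of_lt_of_le one_pos hγ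
    have Ilhs : IntervalIntegrable
        (fun g : ℝ => (Real.log γ + Real.log g) * Real.exp (-g)) volume 0 gu := by
      have : (fun g : ℝ => (Real.log γ + Real.log g) * Real.exp (-g))
          = fun g : ℝ => Real.log γ * Real.exp (-g) + Real.log g * Real.exp (-g) := by
        funext g; ring
      rw [this]
      exact (I_exp.const_mul _).add I_loge
    have key : (∫ g in (0:ℝ)..gu, (Real.log γ + Real.log g) * Real.exp (-g)) ≤ X γ := by
      apply integral_mono_ae_restrict hgu.le Ilhs (I_X γ hγ0)
      have hne : ∀ᵐ x ∂(volume.restrict (Set.Icc (0:ℝ) gu)), x ∈ ({0} : Set ℝ)ᶜ :=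
        ae_restrict_of_ae (compl_mem_ae_iff.mpr (measure_singleton 0))
      filter_upwards [hne, ae_restrict_mem measurableSet_Icc] with x hx0 hx
      have hx0' : x ≠ 0 := by simpa using hx0
      have hxpos : 0 < x := lt_of_le_of_ne hx.1 (Ne.symm hx0')
      have h1 : Real.log γ + Real.log x = Real.log (γ * x) :=
        (Real.log_mul (ne_of_gt hγ0) (ne_of_gt hxpos)).symm
      rw [h1]
      apply mul_le_mul_of_nonneg_right _ (Real.exp_nonneg _)
      apply Real.log_le_log (by positivity)
      linarith
    calc Real.log γ * A + C₁
        = ∫ g in (0:ℝ)..gu, (Real.log γ + Real.log g) * Real.exp (-g) := by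
          have : (fun g : ℝ => (Real.log γ + Real.log g) * Real.exp (-g))
              = fun g : ℝ => Real.log γ * Real.exp (-g) + Real.log g * Real.exp (-g) := by
            funext g; ring
          rw [this, integral_add (I_exp.const_mul _) I_loge, intervalIntegral.integral_const_mul, hA]
      _ ≤ X γ := key
  -- upper bound
  have hup : ∀ γ : ℝ, 1 ≤ γ → X γ ≤ Real.log γ * A + C₂ := by
    intro γ hγ
    have hγ0 : (0:ℝ) < γ := lt_of_lt_of_le one_pos hγ
    have Irhs : IntervalIntegrable
        (fun g : ℝ => (Real.log γ + (Real.log 2 + Real.log (1 + g))) * Real.exp (-g))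
        volume 0 gu := by
      have : (fun g : ℝ => (Real.log γ + (Real.log 2 + Real.log (1 + g))) * Real.exp (-g))
          = fun g : ℝ => Real.log γ * Real.exp (-g)
            + (Real.log 2 + Real.log (1 + g)) * Real.exp (-g) := by
        funext g; ring
      rw [this]
      exact (I_exp.const_mul _).add I_upe
    have key : X γ ≤ ∫ g in (0:ℝ)..gu,
        (Real.log γ + (Real.log 2 + Real.log (1 + g))) * Real.exp (-g) := by
      apply integral_mono_on hgu.le (I_X γ hγ0) Irhs
      intro x hx
      apply mul_le_mul_of_nonneg_right _ (Real.exp_nonneg _)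
      have hx0 : 0 ≤ x := hx.1
      have h1 : Real.log γ + (Real.log 2 + Real.log (1 + x))
          = Real.log (γ * (2 * (1 + x))) := by
        rw [Real.log_mul (ne_of_gt hγ0) (by positivity),
          Real.log_mul (by norm_num) (by positivity)]
      rw [h1]
      apply Real.log_le_log (by positivity)
      nlinarith
    calc X γ ≤ ∫ g in (0:ℝ)..gu,
          (Real.log γ + (Real.log 2 + Real.log (1 + g))) * Real.exp (-g) := key
      _ = Real.log γ * A + C₂ := by
          have : (fun g : ℝ => (Real.log γ + (Real.log 2 + Real.log (1 + g))) * Real.exp (-g))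
              = fun g : ℝ => Real.log γ * Real.exp (-g)
                + (Real.log 2 + Real.log (1 + g)) * Real.exp (-g) := by
            funext g; ring
          rw [this, integral_add (I_exp.const_mul _) I_upe, intervalIntegral.integral_const_mul, hA]
  -- limits of the bounding functions
  have hloglim : Tendsto (fun γ : ℝ => (Real.log γ)⁻¹) atTop (nhds 0) :=
    Real.tendsto_log_atTop.inv_tendsto_atTop
  have hLlim : ∀ C : ℝ, Tendsto (fun γ : ℝ => A + C * (Real.log γ)⁻¹) atTop (nhds A) := by
    intro C
    have : Tendsto (fun γ : ℝ => C * (Real.log γ)⁻¹) atTop (nhds 0) := by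
      simpa using hloglim.const_mul C
    simpa using tendsto_const_nhds.add this
  -- the main function agrees with X γ / log γ
  have hfun : ∀ γ : ℝ,
      (∫ g in (0:ℝ)..gu, Real.logb 2 (1 + γ * g) * Real.exp (-g)) / Real.logb 2 γ
        = X γ / Real.log γ := by
    intro γ
    have h1 : (∫ g in (0:ℝ)..gu, Real.logb 2 (1 + γ * g) * Real.exp (-g))
        = X γ / Real.log 2 := by
      rw [hX]
      rw [← intervalIntegral.integral_div]
      congr 1; funext g
      rw [Real.logb]; ring
    rw [h1, Real.logb, div_eq_mul_inv (X γ), div_eq_mul_inv (Real.log γ),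
      mul_div_mul_right _ _ (inv_ne_zero hlog2)]
  -- squeeze
  have hmain : Tendsto (fun γ : ℝ => X γ / Real.log γ) atTop (nhds A) := by
    apply tendsto_of_tendsto_of_tendsto_of_le_of_le' (hLlim C₁) (hLlim C₂)
    · filter_upwards [eventually_ge_atTop (2:ℝ)] with γ hγ
      have hγ1 : (1:ℝ) ≤ γ := by linarith
      have hlogγ : 0 < Real.log γ := Real.log_pos (by linarith)
      have heq : A + C₁ * (Real.log γ)⁻¹ = (Real.log γ * A + C₁) / Real.log γ := by
        field_simp
      rw [heq]
      exact (div_le_div_iff_of_pos_right hlogγ).mpr (hlow γ hγ1)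
    · filter_upwards [eventually_ge_atTop (2:ℝ)] with γ hγ
      have hγ1 : (1:ℝ) ≤ γ := by linarith
      have hlogγ : 0 < Real.log γ := Real.log_pos (by linarith)
      have heq : A + C₂ * (Real.log γ)⁻¹ = (Real.log γ * A + C₂) / Real.log γ := by
        field_simp
      rw [heq]
      exact (div_le_div_iff_of_pos_right hlogγ).mpr (hup γ hγ1)
  exact hmain.congr fun γ => (hfun γ).symm
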